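/- Let S and T be semistandard n-tableaux of shape P/Q. Then the cellwise minimum (r,c) ↦ min{S(r,c), T(r,c)} and the cellwise maximum (r,c) ↦ max{S(r,c), T(r,c)} are again semistandard n-tableaux of shape P/Q. Consequently, the set of all semistandard n-tableaux of shape P/Q, partially ordered by S ≤ T iff S(r,c) ≥ T(r,c) for every cell (r,c), is a distributive lattice in which the join of S and T is their cellwise minimum and the meet of S and T is their cellwise maximum. -/

import Mathlib

open Finset
open scoped Classical

def ShapeHyps (m n : ℕ) (P Q : ℕ → ℤ) : Prop :=
  2 ≤ n ∧ n ≤ m ∧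
  (∀ r, 1 ≤ r → r < m → P (r + 1) ≤ P r) ∧ 0 ≤ P m ∧
  (∀ r, 1 ≤ r → r < m → Q (r + 1) ≤ Q r) ∧ 0 ≤ Q m ∧
  (∀ r, 1 ≤ r → r ≤ m → Q r ≤ P r) ∧
  (∀ c : ℤ, ((Finset.Icc 1 m).filter (fun r => Q r < c ∧ c ≤ P r)).card ≤ n)

/-- The finite set of cells of the skew shape `P/Q`: pairs `(r,c)` with
`1 ≤ r ≤ m` and `Q_r < c ≤ P_r`. -/
noncomputable def cells (m : ℕ) (P Q : ℕ → ℤ) : Finset (ℕ × ℤ) :=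
  (Finset.Icc 1 m ×ˢ Finset.Icc 1 (P 1)).filter fun x => Q x.1 < x.2 ∧ x.2 ≤ P x.1

/-- A semistandard `n`-tableau of skew shape `P/Q`: entries in `{1,…,n}`, rows
weakly increasing, columns strictly increasing; values outside the cells of the
shape are normalized to `0`. -/
def IsSSYT (m n : ℕ) (P Q : ℕ → ℤ) (T : ℕ × ℤ → ℕ) : Prop :=
  (∀ x ∈ cells m P Q, 1 ≤ T x ∧ T x ≤ n) ∧
  (∀ (r : ℕ) (c : ℤ), (r, c) ∈ cells m P Q → (r, c + 1) ∈ cells m P Q →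
    T (r, c) ≤ T (r, c + 1)) ∧
  (∀ (r : ℕ) (c : ℤ), (r, c) ∈ cells m P Q → (r + 1, c) ∈ cells m P Q →
    T (r, c) < T (r + 1, c)) ∧
  (∀ x, x ∉ cells m P Q → T x = 0)

/-- `#_i(T)`: the number of cells of `T` with entry `i`. -/
noncomputable def entryCount (m : ℕ) (P Q : ℕ → ℤ) (T : ℕ × ℤ → ℕ) (i : ℕ) : ℕ :=
  ((cells m P Q).filter fun x => T x = i).card

/-- The skew Schur polynomial `s_{P/Q}(x_1,…,x_n)`, with the variable `x_{i+1}`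
encoded as `MvPolynomial.X (i : Fin n)`. -/
noncomputable def skewSchur (m n : ℕ) (P Q : ℕ → ℤ) : MvPolynomial (Fin n) ℤ :=
  ∑ᶠ T ∈ {T : ℕ × ℤ → ℕ | IsSSYT m n P Q T},
    ∏ i : Fin n, MvPolynomial.X i ^ entryCount m P Q T ((i : ℕ) + 1)


lemma ssyt_min_max (m n : ℕ) (P Q : ℕ → ℤ) (S T : ℕ × ℤ → ℕ)
    (hS : IsSSYT m n P Q S) (hT : IsSSYT m n P Q T) :
    IsSSYT m n P Q (fun x => min (S x) (T x)) ∧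
    IsSSYT m n P Q (fun x => max (S x) (T x)) := by
  obtain ⟨hS1, hS2, hS3, hS4⟩ := hS
  obtain ⟨hT1, hT2, hT3, hT4⟩ := hT
  constructor
  · refine ⟨fun x hx => ⟨le_min (hS1 x hx).1 (hT1 x hx).1,
      (min_le_left _ _).trans (hS1 x hx).2⟩, fun r c h1 h2 =>
      min_le_min (hS2 r c h1 h2) (hT2 r c h1 h2), fun r c h1 h2 =>
      lt_min ((min_le_left _ _).trans_lt (hS3 r c h1 h2))
        ((min_le_right _ _).trans_lt (hT3 r c h1 h2)), fun x hx => by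
      simp [hS4 x hx, hT4 x hx]⟩
  · refine ⟨fun x hx => ⟨(hS1 x hx).1.trans (le_max_left _ _),
      max_le (hS1 x hx).2 (hT1 x hx).2⟩, fun r c h1 h2 =>
      max_le_max (hS2 r c h1 h2) (hT2 r c h1 h2), fun r c h1 h2 =>
      max_lt ((hS3 r c h1 h2).trans_le (le_max_left _ _))
        ((hT3 r c h1 h2).trans_le (le_max_right _ _)), fun x hx => by
      simp [hS4 x hx, hT4 x hx]⟩

/-- The cellwise minimum and maximum of two semistandard
`n`-tableaux of shape `P/Q` are again semistandard, and consequently the set of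
semistandard `n`-tableaux of shape `P/Q`, ordered by reverse entrywise
comparison, is a distributive lattice whose join is the cellwise minimum and
whose meet is the cellwise maximum. -/
theorem ssyt_distributive_lattice
    (m n : ℕ) (P Q : ℕ → ℤ) (h : ShapeHyps m n P Q) :
    (∀ S T : ℕ × ℤ → ℕ, IsSSYT m n P Q S → IsSSYT m n P Q T →
      IsSSYT m n P Q (fun x => min (S x) (T x)) ∧
      IsSSYT m n P Q (fun x => max (S x) (T x))) ∧
    ∃ inst : DistribLattice {T : ℕ × ℤ → ℕ // IsSSYT m n P Q T},
      (∀ S T : {T : ℕ × ℤ → ℕ // IsSSYT m n P Q T},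
        inst.le S T ↔ ∀ x ∈ cells m P Q, T.1 x ≤ S.1 x) ∧
      (∀ S T : {T : ℕ × ℤ → ℕ // IsSSYT m n P Q T},
        (inst.sup S T).1 = fun x => min (S.1 x) (T.1 x)) ∧
      (∀ S T : {T : ℕ × ℤ → ℕ // IsSSYT m n P Q T},
        (inst.inf S T).1 = fun x => max (S.1 x) (T.1 x)) := by
  refine ⟨fun S T hS hT => ssyt_min_max m n P Q S T hS hT, ?_⟩
  refine ⟨{
    le := fun S T => ∀ x, T.1 x ≤ S.1 x
    lt := fun S T => (∀ x, T.1 x ≤ S.1 x) ∧ ¬ ∀ x, S.1 x ≤ T.1 x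
    lt_iff_le_not_ge := fun _ _ => Iff.rfl
    le_refl := fun S x => le_rfl
    le_trans := fun S T U h1 h2 x => (h2 x).trans (h1 x)
    le_antisymm := fun S T h1 h2 => Subtype.ext (funext fun x =>
      le_antisymm (h2 x) (h1 x))
    sup := fun S T => ⟨fun x => min (S.1 x) (T.1 x),
      (ssyt_min_max m n P Q S.1 T.1 S.2 T.2).1⟩
    le_sup_left := fun S T x => min_le_left _ _
    le_sup_right := fun S T x => min_le_right _ _
    sup_le := fun S T U h1 h2 x => le_min (h1 x) (h2 x)
    inf := fun S T => ⟨fun x => max (S.1 x) (T.1 x),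
      (ssyt_min_max m n P Q S.1 T.1 S.2 T.2).2⟩
    inf_le_left := fun S T x => le_max_left _ _
    inf_le_right := fun S T x => le_max_right _ _
    le_inf := fun S T U h1 h2 x => max_le (h1 x) (h2 x)
    le_sup_inf := fun S T U x => le_of_eq (by
      show min (S.1 x) (max (T.1 x) (U.1 x)) =
        max (min (S.1 x) (T.1 x)) (min (S.1 x) (U.1 x))
      rw [min_max_distrib_left]) }, ?_, fun S T => rfl, fun S T => rfl⟩
  intro S T
  constructor
  · intro hle x hx
    exact hle x
  · intro hle x
    by_cases hx : x ∈ cells m P Q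
    · exact hle x hx
    · simp [T.2.2.2.2 x hx]
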